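/- Let 𝒴 and 𝒵 be finite disjoint subsets of ℝ^d, and write γ(𝒳) := γ(G(𝒳,1)) for the domination number of the geometric graph G(𝒳,1). Then γ(𝒴 ∪ 𝒵) ≥ γ(𝒴) + γ(𝒵) − (1 + κ(B_2(o)))·|∂_𝒵(𝒴)|, where κ(B_2(o)) is the minimum number of closed Euclidean balls of radius 1 needed to cover the closed ball of radius 2 centred at the origin, and ∂_𝒵(𝒴) is the set of points of 𝒴 at Euclidean distance at most 1 from 𝒵. -/

import Mathlib

open MeasureTheory ProbabilityTheory Filter Set Metric Bornology
open scoped Classical ENNReal NNReal symmDiff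

noncomputable section

/-- Points of `ℝ^d`. -/
abbrev Pt (d : ℕ) := EuclideanSpace ℝ (Fin d)

/-- The half-open cube `Q_s = [-s/2, s/2)^d`. -/
def cube (d : ℕ) (s : ℝ) : Set (Pt d) := {x | ∀ i, x i ∈ Set.Ico (-(s / 2)) (s / 2)}

/-- The uniform distribution on `Q_s`. -/
def unifCube (d : ℕ) (s : ℝ) : Measure (Pt d) :=
  (volume (cube d s))⁻¹ • volume.restrict (cube d s)

/-- `E[ζ(H_{λ,s})]`, where `H_{λ,s} = {Y_1, …, Y_N}` with `N` a Poisson random variable of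
mean `λ s^d` independent of an i.i.d. sequence `Y_1, Y_2, …` of uniform points of `Q_s`. -/
def poissonExp (d : ℕ) (zeta : Finset (Pt d) → ℝ) (lam s : ℝ) : ℝ :=
  ∑' k : ℕ, (Real.exp (-(lam * s ^ d)) * (lam * s ^ d) ^ k / (Nat.factorial k : ℝ)) *
    ∫ y : Fin k → Pt d, zeta (Finset.image y Finset.univ) ∂(Measure.pi fun _ => unifCube d s)

/-- `|∂_Z(Y)|`: the number of points of `Y` lying within Euclidean distance 1 of `Z`. -/
def bdry (d : ℕ) (Y Z : Finset (Pt d)) : ℕ :=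
  {y ∈ (Y : Set (Pt d)) | ∃ z ∈ Z, dist y z ≤ 1}.ncard

/-- The rescaled set `r⁻¹ 𝒳`. -/
def scaleSet (d : ℕ) (r : ℝ) (X : Finset (Pt d)) : Finset (Pt d) :=
  X.image fun x => r⁻¹ • x

/-- `ζ*(A) = sup {ζ(X) : X ⊆ A finite}`. -/
def zetaStar (d : ℕ) (zeta : Finset (Pt d) → ℝ) (A : Set (Pt d)) : ℝ :=
  sSup {t | ∃ X : Finset (Pt d), (X : Set (Pt d)) ⊆ A ∧ t = zeta X}

/-- Domination number of the geometric graph `G(X, r)`. -/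
def domNum (d : ℕ) (r : ℝ) (X : Finset (Pt d)) : ℕ :=
  sInf {n | ∃ A ⊆ X, A.card = n ∧ ∀ x ∈ X, ∃ a ∈ A, dist x a ≤ r}

/-- Independence number of the geometric graph `G(X, r)`. -/
def indepNum (d : ℕ) (r : ℝ) (X : Finset (Pt d)) : ℕ :=
  sSup {n | ∃ A ⊆ X, A.card = n ∧ ∀ x ∈ A, ∀ y ∈ A, x ≠ y → r < dist x y}

/-- Clique-covering number of the geometric graph `G(X, r)`. -/
def cliqueCoverNum (d : ℕ) (r : ℝ) (X : Finset (Pt d)) : ℕ :=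
  sInf {n | ∃ P : Finset (Finset (Pt d)), P.card = n ∧
    (∀ C ∈ P, C ⊆ X ∧ C.Nonempty ∧ ∀ x ∈ C, ∀ y ∈ C, x ≠ y → dist x y ≤ r) ∧
    ∀ x ∈ X, ∃! C, C ∈ P ∧ x ∈ C}

/-- Vertex cover number of the geometric graph `G(X, r)`. -/
def vcNum (d : ℕ) (r : ℝ) (X : Finset (Pt d)) : ℕ :=
  sInf {n | ∃ A ⊆ X, A.card = n ∧
    ∀ x ∈ X, ∀ y ∈ X, x ≠ y → dist x y ≤ r → x ∈ A ∨ y ∈ A}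

/-- Number of isolated vertices of the geometric graph `G(X, r)`. -/
def isolCount (d : ℕ) (r : ℝ) (X : Finset (Pt d)) : ℕ :=
  {x ∈ (X : Set (Pt d)) | ∀ y ∈ X, y ≠ x → r < dist x y}.ncard

/-- `κ(A)`: the minimal number of closed unit balls whose union contains `A`. -/
def covNum (d : ℕ) (A : Set (Pt d)) : ℕ :=
  sInf {n | ∃ C : Finset (Pt d), C.card = n ∧ A ⊆ ⋃ x ∈ C, Metric.closedBall x 1}

/-- `α*(A)`: the maximum cardinality of a finite subset of `A` with pairwise distances `> 1`. -/
def packNum (d : ℕ) (A : Set (Pt d)) : ℕ :=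
  sSup {n | ∃ X : Finset (Pt d), (X : Set (Pt d)) ⊆ A ∧ X.card = n ∧
    ∀ x ∈ X, ∀ y ∈ X, x ≠ y → 1 < dist x y}

/-- `γ*(A) = sup {γ(G(X,1)) : X ⊆ A finite}`. -/
def domStar (d : ℕ) (A : Set (Pt d)) : ℕ :=
  sSup {n | ∃ X : Finset (Pt d), (X : Set (Pt d)) ⊆ A ∧ domNum d 1 X = n}

/-- Minimum weight of a travelling salesman tour through `X`, for the weight function `w`
(a tour is a Hamiltonian cycle of the complete graph on `X`, and an edge `{x,y}` has
weight `w (x - y)`), with the convention that the value is `0` when `|X| ≤ 2`. -/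
def TSPw (d : ℕ) (w : Pt d → ℝ) (X : Finset (Pt d)) : ℝ :=
  if h : 3 ≤ X.card then
    haveI : NeZero X.card := ⟨by omega⟩
    sInf {t | ∃ g : Fin X.card → Pt d, Function.Injective g ∧ (∀ i, g i ∈ X) ∧
      t = ∑ i, w (g (i + 1) - g i)}
  else 0

/-- Maximum `H`-packing number of the geometric graph `G(X, r)`. -/
def hPackNum {V : Type} [Fintype V] (H : SimpleGraph V) (d : ℕ) (r : ℝ)
    (X : Finset (Pt d)) : ℕ :=
  sSup {m | ∃ φ : Fin m → V → Pt d,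
    (∀ i, Function.Injective (φ i)) ∧ (∀ i v, φ i v ∈ X) ∧
    (∀ i u v, H.Adj u v → dist (φ i u) (φ i v) ≤ r) ∧
    (∀ i j, i ≠ j → ∀ u v, φ i u ≠ φ j v)}


/-- superadditivity up to boundary for the domination number of the RGG. -/
theorem domination_number_superadd {d : ℕ}
    (Y Z : Finset (Pt d)) (hYZ : Disjoint Y Z) :
    (domNum d 1 Y : ℝ) + (domNum d 1 Z : ℝ)
        - (1 + (covNum d (Metric.closedBall (0 : Pt d) 2) : ℝ)) * (bdry d Y Z : ℝ)
      ≤ (domNum d 1 (Y ∪ Z) : ℝ) := by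
  classical
  set Bf : Finset (Pt d) := Y.filter (fun y => ∃ z ∈ Z, dist y z ≤ 1) with hBf
  have hbdry : bdry d Y Z = Bf.card := by
    rw [bdry, show {y ∈ (Y : Set (Pt d)) | ∃ z ∈ Z, dist y z ≤ 1} = (Bf : Set (Pt d)) by
      ext y; simp [hBf]]
    exact Set.ncard_coe_finset _
  -- a finite covering of the ball of radius 2 by unit balls, of minimal cardinality
  obtain ⟨C, hCcard, hCcover⟩ :
      ∃ C : Finset (Pt d), C.card = covNum d (Metric.closedBall (0 : Pt d) 2) ∧
        Metric.closedBall (0 : Pt d) 2 ⊆ ⋃ x ∈ C, Metric.closedBall x 1 := by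
    have hne : {n | ∃ C : Finset (Pt d), C.card = n ∧
        Metric.closedBall (0 : Pt d) 2 ⊆ ⋃ x ∈ C, Metric.closedBall x 1}.Nonempty := by
      obtain ⟨t, ht⟩ := (isCompact_closedBall (0 : Pt d) 2).elim_finite_subcover
        (fun x : Pt d => Metric.ball x 1) (fun x => isOpen_ball)
        (fun x _ => Set.mem_iUnion.2 ⟨x, Metric.mem_ball_self one_pos⟩)
      exact ⟨t.card, t, rfl, ht.trans (Set.iUnion₂_mono fun x _ => Metric.ball_subset_closedBall)⟩
    obtain ⟨C, h1, h2⟩ := Nat.sInf_mem hne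
    exact ⟨C, h1, h2⟩
  -- a minimal dominating set of Y ∪ Z
  obtain ⟨A, hAsub, hAcard, hAdom⟩ :
      ∃ A ⊆ Y ∪ Z, A.card = domNum d 1 (Y ∪ Z) ∧
        ∀ x ∈ Y ∪ Z, ∃ a ∈ A, dist x a ≤ 1 := by
    have hne : {n | ∃ A ⊆ Y ∪ Z, A.card = n ∧ ∀ x ∈ Y ∪ Z, ∃ a ∈ A, dist x a ≤ 1}.Nonempty :=
      ⟨(Y ∪ Z).card, Y ∪ Z, Finset.Subset.refl _, rfl, fun x hx => ⟨x, hx, by simp⟩⟩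
    obtain ⟨A, h1, h2, h3⟩ := Nat.sInf_mem hne
    exact ⟨A, h1, h2, h3⟩
  -- bound on domNum of Y
  have hY : domNum d 1 Y ≤ (A ∩ Y).card + Bf.card := by
    have hmem : (A ∩ Y ∪ Bf).card ∈
        {n | ∃ A' ⊆ Y, A'.card = n ∧ ∀ x ∈ Y, ∃ a ∈ A', dist x a ≤ 1} := by
      refine ⟨A ∩ Y ∪ Bf, ?_, rfl, ?_⟩
      · intro x hx
        rcases Finset.mem_union.1 hx with h | h
        · exact (Finset.mem_inter.1 h).2
        · exact (Finset.mem_filter.1 h).1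
      · intro y hy
        obtain ⟨a, ha, hda⟩ := hAdom y (Finset.mem_union_left _ hy)
        rcases Finset.mem_union.1 (hAsub ha) with h | h
        · exact ⟨a, Finset.mem_union_left _ (Finset.mem_inter.2 ⟨ha, h⟩), hda⟩
        · exact ⟨y, Finset.mem_union_right _ (Finset.mem_filter.2 ⟨hy, a, h, hda⟩), by simp⟩
    calc domNum d 1 Y ≤ (A ∩ Y ∪ Bf).card := Nat.sInf_le hmem
      _ ≤ (A ∩ Y).card + Bf.card := Finset.card_union_le _ _
  -- bound on domNum of Z
  have hZ : domNum d 1 Z ≤ (A ∩ Z).card + C.card * (A ∩ Bf).card := by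
    set f : Pt d → Pt d → Pt d := fun a c =>
      if h : ∃ z, z ∈ Z ∧ dist z (a + (2:ℝ)⁻¹ • c) ≤ 1/2 then h.choose else 0 with hf
    set g : Pt d → Finset (Pt d) := fun a =>
      (C.filter (fun c => ∃ z, z ∈ Z ∧ dist z (a + (2:ℝ)⁻¹ • c) ≤ 1/2)).image (f a) with hg
    set D : Finset (Pt d) := (A ∩ Z) ∪ (A ∩ Bf).biUnion g with hD
    have hDZ : D ⊆ Z := by
      intro x hx
      rcases Finset.mem_union.1 hx with h | h
      · exact (Finset.mem_inter.1 h).2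
      · obtain ⟨a, _, hx'⟩ := Finset.mem_biUnion.1 h
        obtain ⟨c, hc, hfc⟩ := Finset.mem_image.1 hx'
        have hex := (Finset.mem_filter.1 hc).2
        rw [← hfc, hf]
        simp only [dif_pos hex]
        exact hex.choose_spec.1
    have hDdom : ∀ z ∈ Z, ∃ a ∈ D, dist z a ≤ 1 := by
      intro z hz
      obtain ⟨a, ha, hda⟩ := hAdom z (Finset.mem_union_right _ hz)
      rcases Finset.mem_union.1 (hAsub ha) with hY' | hZ'
      · have haB : a ∈ Bf := Finset.mem_filter.2 ⟨hY', z, hz, by rwa [dist_comm]⟩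
        have hu : (2:ℝ) • (z - a) ∈ Metric.closedBall (0 : Pt d) 2 := by
          rw [Metric.mem_closedBall, dist_zero_right, norm_smul]
          have h1 : ‖z - a‖ ≤ 1 := by rwa [← dist_eq_norm]
          have : ‖(2:ℝ)‖ = 2 := by norm_num
          rw [this]; linarith
        obtain ⟨c, hc, hucc⟩ := Set.mem_iUnion₂.1 (hCcover hu)
        have hdzc : dist z (a + (2:ℝ)⁻¹ • c) ≤ 1/2 := by
          have hveq : z - (a + (2:ℝ)⁻¹ • c) = (2:ℝ)⁻¹ • ((2:ℝ) • (z - a) - c) := by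
            rw [smul_sub, smul_smul]
            norm_num
            abel
          have h1 : ‖(2:ℝ) • (z - a) - c‖ ≤ 1 := by
            rwa [Metric.mem_closedBall, dist_eq_norm] at hucc
          rw [dist_eq_norm, hveq, norm_smul]
          have : ‖(2:ℝ)⁻¹‖ = 2⁻¹ := by norm_num
          rw [this]; linarith
        have hex : ∃ z', z' ∈ Z ∧ dist z' (a + (2:ℝ)⁻¹ • c) ≤ 1/2 := ⟨z, hz, hdzc⟩
        refine ⟨f a c, ?_, ?_⟩
        · exact Finset.mem_union_right _ (Finset.mem_biUnion.2 ⟨a, Finset.mem_inter.2 ⟨ha, haB⟩,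
            Finset.mem_image.2 ⟨c, Finset.mem_filter.2 ⟨hc, hex⟩, rfl⟩⟩)
        · rw [hf]
          simp only [dif_pos hex]
          calc dist z hex.choose
              ≤ dist z (a + (2:ℝ)⁻¹ • c) + dist (a + (2:ℝ)⁻¹ • c) hex.choose :=
                dist_triangle _ _ _
            _ ≤ 1/2 + 1/2 :=
                add_le_add hdzc (by rw [dist_comm]; exact hex.choose_spec.2)
            _ = 1 := by norm_num
      · exact ⟨a, Finset.mem_union_left _ (Finset.mem_inter.2 ⟨ha, hZ'⟩), hda⟩
    have hcard : D.card ≤ (A ∩ Z).card + C.card * (A ∩ Bf).card := by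
      calc D.card ≤ (A ∩ Z).card + ((A ∩ Bf).biUnion g).card := Finset.card_union_le _ _
        _ ≤ (A ∩ Z).card + ∑ a ∈ A ∩ Bf, (g a).card :=
            Nat.add_le_add_left Finset.card_biUnion_le _
        _ ≤ (A ∩ Z).card + ∑ _a ∈ A ∩ Bf, C.card := by
            refine Nat.add_le_add_left (Finset.sum_le_sum fun a _ => ?_) _
            rw [hg]
            exact (Finset.card_image_le).trans (Finset.card_filter_le _ _)
        _ = (A ∩ Z).card + C.card * (A ∩ Bf).card := by
            rw [Finset.sum_const, smul_eq_mul, mul_comm]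
    exact le_trans (Nat.sInf_le ⟨D, hDZ, rfl, hDdom⟩) hcard
  -- combine
  have hsplit : (A ∩ Y).card + (A ∩ Z).card = A.card := by
    rw [← Finset.card_union_of_disjoint
      (hYZ.mono (Finset.inter_subset_right) (Finset.inter_subset_right)),
      ← Finset.inter_union_distrib_left, Finset.inter_eq_left.2 hAsub]
  have c1 : (domNum d 1 Y : ℝ) ≤ (A ∩ Y).card + Bf.card := by exact_mod_cast hY
  have c2 : (domNum d 1 Z : ℝ) ≤ (A ∩ Z).card + C.card * (A ∩ Bf).card := by exact_mod_cast hZ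
  have c3 : ((A ∩ Y).card : ℝ) + (A ∩ Z).card = A.card := by exact_mod_cast hsplit
  have c4 : ((A ∩ Bf).card : ℝ) ≤ Bf.card := by
    exact_mod_cast Finset.card_le_card (Finset.inter_subset_right)
  have c5 : (A.card : ℝ) = domNum d 1 (Y ∪ Z) := by exact_mod_cast hAcard
  have c6 : (C.card : ℝ) = (covNum d (Metric.closedBall (0 : Pt d) 2) : ℝ) := by
    exact_mod_cast hCcard
  have hC0 : (0:ℝ) ≤ (C.card : ℝ) := Nat.cast_nonneg _
  have c7 : (C.card : ℝ) * (A ∩ Bf).card ≤ (C.card : ℝ) * Bf.card :=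
    mul_le_mul_of_nonneg_left c4 hC0
  rw [hbdry, ← c6]

  nlinarith [c1, c2, c3, c5, c7]
end
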